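/- Let R = {r_1,…,r_t} ⊆ {1,…,L−1} and Γ = {K_{r_1},…,K_{r_t}}, and let B_{ζs}(θ, R, Γ) be the composition of β embeddings adding K_{r_i} neurons to layer r_i for i = 1,…,t. Then for every parameter vector θ, the empirical risk of the network enlarged at all layers in R is preserved: R̂_emp(B_{ζs}(θ, R, Γ)) = R_emp(θ). -/

import Mathlib

/-- Parameters of a fully connected feedforward network: `w ℓ j i` is the weight from
unit `i` of layer `ℓ-1` to unit `j` of layer `ℓ`, and `b ℓ j` is the bias of unit `j`
of layer `ℓ`.  Layers are numbered `1, …, L` (layer `0` is the input); units within a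
layer are numbered from `0`, so layer `ℓ` consists of the units `0, …, H ℓ - 1`. -/
structure NNParams where
  w : ℕ → ℕ → ℕ → ℝ
  b : ℕ → ℕ → ℝ

/-- `layerOut g H θ x ℓ i` : the output of unit `i` of layer `ℓ` on input `x`
(`layerOut g H θ x 0 = x`, and for `ℓ ≥ 1` it is `g` applied to the pre-activation). -/
noncomputable def layerOut (g : ℝ → ℝ) (H : ℕ → ℕ) (θ : NNParams) (x : ℕ → ℝ) :
    ℕ → ℕ → ℝ
  | 0, i => x i
  | ℓ + 1, i =>
      g (∑ j ∈ Finset.range (H ℓ), θ.w (ℓ + 1) i j * layerOut g H θ x ℓ j + θ.b (ℓ + 1) i)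

/-- Pre-activation `a_j^ℓ(x, θ)` of unit `j` of layer `ℓ ≥ 1`:
`a_j^ℓ = ∑_{i < H (ℓ-1)} w_{ji}^ℓ · (output of unit i of layer ℓ-1) + σ_j^ℓ`.
The outputs of the last layer `L` are `f_r(x,θ) = preact g H θ x L r` (linear output units). -/
noncomputable def preact (g : ℝ → ℝ) (H : ℕ → ℕ) (θ : NNParams) (x : ℕ → ℝ)
    (ℓ j : ℕ) : ℝ :=
  ∑ i ∈ Finset.range (H (ℓ - 1)), θ.w ℓ j i * layerOut g H θ x (ℓ - 1) i + θ.b ℓ j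

/-- Empirical risk `R_emp(θ) = (1/P) ∑_{p<P} ℒ(y^p, f(x^p, θ))`, where the network has
`L` layers with layer sizes given by `H`, the training inputs are `X p` and the labels
`Y p`, and `m` is the output dimension seen by the loss. -/
noncomputable def Remp (g : ℝ → ℝ) (H : ℕ → ℕ) (L P : ℕ) {m : ℕ}
    (X Y : ℕ → ℕ → ℝ) (loss : (ℕ → ℝ) → (Fin m → ℝ) → ℝ) (θ : NNParams) : ℝ :=
  (1 / (P : ℝ)) * ∑ p ∈ Finset.range P,
    loss (Y p) (fun r => preact g H θ (X p) L r)

/-- Layer sizes of the network enlarged by adding `K` new neurons to layer `l`. -/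
def enlargeH (H : ℕ → ℕ) (l K : ℕ) : ℕ → ℕ :=
  fun ℓ => if ℓ = l then H l + K else H ℓ

/-- The embedding `α_{ζv}` : copy all parameters, give the `k`-th new neuron of layer `l`
(`k = 0, …, K-1`, i.e. unit `H l + k`) the bias `ζ k` and incoming weights `v k`, and
set all weights from the new neurons to layer `l+1` to zero. -/
noncomputable def alphaEmb (H : ℕ → ℕ) (l K : ℕ) (ζ : ℕ → ℝ) (v : ℕ → ℕ → ℝ)
    (θ : NNParams) : NNParams where
  w := fun ℓ j i =>
    if ℓ = l ∧ H l ≤ j then v (j - H l) i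
    else if ℓ = l + 1 ∧ H l ≤ i then 0
    else θ.w ℓ j i
  b := fun ℓ j => if ℓ = l ∧ H l ≤ j then ζ (j - H l) else θ.b ℓ j

/-- The embedding `β_{ζs}` : copy all parameters except the biases of layer `l+1`, give
the `k`-th new neuron of layer `l` the bias `ζ k` and zero incoming weights, set the
outgoing weight from the `k`-th new neuron to unit `j` of layer `l+1` to `s j k`, and
replace the bias of unit `j` of layer `l+1` by `σ_j - ∑_{k<K} s j k · g (ζ k)`. -/
noncomputable def betaEmb (g : ℝ → ℝ) (H : ℕ → ℕ) (l K : ℕ) (ζ : ℕ → ℝ)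
    (s : ℕ → ℕ → ℝ) (θ : NNParams) : NNParams where
  w := fun ℓ j i =>
    if ℓ = l ∧ H l ≤ j then 0
    else if ℓ = l + 1 ∧ H l ≤ i then s j (i - H l)
    else θ.w ℓ j i
  b := fun ℓ j =>
    if ℓ = l ∧ H l ≤ j then ζ (j - H l)
    else if ℓ = l + 1 then θ.b (l + 1) j - ∑ k ∈ Finset.range K, s j k * g (ζ k)
    else θ.b ℓ j

/-- The embedding `γ_λ` : duplicate unit `h` of layer `l` into each of the `K` new
neurons (same bias and incoming weights as unit `h`), and split the outgoing weights:
unit `h` keeps `lam 0 · w_{jh}^{l+1}` and the `k`-th new neuron (`k = 0, …, K-1`,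
i.e. unit `H l + k`, corresponding to `λ_{k+1}` of the paper) gets
`lam (k+1) · w_{jh}^{l+1}`; all other parameters are copied. -/
noncomputable def gammaEmb (H : ℕ → ℕ) (l K : ℕ) (h : ℕ) (lam : ℕ → ℝ)
    (θ : NNParams) : NNParams where
  w := fun ℓ j i =>
    if ℓ = l ∧ H l ≤ j then θ.w l h i
    else if ℓ = l + 1 ∧ i = h then lam 0 * θ.w (l + 1) j h
    else if ℓ = l + 1 ∧ H l ≤ i then lam (i - H l + 1) * θ.w (l + 1) j h
    else θ.w ℓ j i
  b := fun ℓ j => if ℓ = l ∧ H l ≤ j then θ.b l h else θ.b ℓ j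

/-- `θ` with the single weight `w ℓ j i` replaced by `t`. -/
noncomputable def updW (θ : NNParams) (ℓ j i : ℕ) (t : ℝ) : NNParams :=
  ⟨fun ℓ' j' i' => if ℓ' = ℓ ∧ j' = j ∧ i' = i then t else θ.w ℓ' j' i', θ.b⟩

/-- `θ` with the single bias `b ℓ j` replaced by `t`. -/
noncomputable def updB (θ : NNParams) (ℓ j : ℕ) (t : ℝ) : NNParams :=
  ⟨θ.w, fun ℓ' j' => if ℓ' = ℓ ∧ j' = j then t else θ.b ℓ' j'⟩

/-- `∇ R_emp(θ) = 0` : every partial derivative of the empirical risk with respect to an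
actual network parameter (a weight `w ℓ j i` or a bias `b ℓ j`, `1 ≤ ℓ ≤ L`, `j < H ℓ`,
`i < H (ℓ-1)`) vanishes at `θ`. -/
def IsCritical (g : ℝ → ℝ) (H : ℕ → ℕ) (L P : ℕ) {m : ℕ}
    (X Y : ℕ → ℕ → ℝ) (loss : (ℕ → ℝ) → (Fin m → ℝ) → ℝ) (θ : NNParams) : Prop :=
  (∀ ℓ j i, 1 ≤ ℓ → ℓ ≤ L → j < H ℓ → i < H (ℓ - 1) →
      deriv (fun t => Remp g H L P X Y loss (updW θ ℓ j i t)) (θ.w ℓ j i) = 0) ∧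
  ∀ ℓ j, 1 ≤ ℓ → ℓ ≤ L → j < H ℓ →
      deriv (fun t => Remp g H L P X Y loss (updB θ ℓ j t)) (θ.b ℓ j) = 0

/-- Layer sizes after enlarging layer `p.1` by `p.2` neurons for each pair in the list. -/
def multiEnlargeH : (ℕ → ℕ) → List (ℕ × ℕ) → (ℕ → ℕ)
  | H, [] => H
  | H, (l, K) :: rest => multiEnlargeH (enlargeH H l K) rest

/-- Composition of `α` embeddings: for each `(l, K)` in the list (in order), add `K` new
neurons to layer `l` via `α` with biases `ζ l` and incoming weights `v l`. -/
noncomputable def multiAlpha (ζ : ℕ → ℕ → ℝ) (v : ℕ → ℕ → ℕ → ℝ) :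
    (ℕ → ℕ) → List (ℕ × ℕ) → NNParams → NNParams
  | _, [], θ => θ
  | H, (l, K) :: rest, θ =>
      multiAlpha ζ v (enlargeH H l K) rest (alphaEmb H l K (ζ l) (v l) θ)

noncomputable def multiBeta (g : ℝ → ℝ) (ζ : ℕ → ℕ → ℝ) (s : ℕ → ℕ → ℕ → ℝ) :
    (ℕ → ℕ) → List (ℕ × ℕ) → NNParams → NNParams
  | _, [], θ => θ
  | H, (l, K) :: rest, θ =>
      multiBeta g ζ s (enlargeH H l K) rest (betaEmb g H l K (ζ l) (s l) θ)

noncomputable def multiGamma (hsel : ℕ → ℕ) (lam : ℕ → ℕ → ℝ) :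
    (ℕ → ℕ) → List (ℕ × ℕ) → NNParams → NNParams
  | _, [], θ => θ
  | H, (l, K) :: rest, θ =>
      multiGamma hsel lam (enlargeH H l K) rest (gammaEmb H l K (hsel l) (lam l) θ)

/-- A single enlargement step: either a `β` embedding with zero outgoing weights, or a
`γ` embedding. -/
inductive EmbStep where
  | beta (l K : ℕ) (ζ : ℕ → ℝ)
  | gamma (l K : ℕ) (h : ℕ) (lam : ℕ → ℝ)

def EmbStep.layer : EmbStep → ℕ
  | .beta l _ _ => l
  | .gamma l _ _ _ => l

def EmbStep.count : EmbStep → ℕ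
  | .beta _ K _ => K
  | .gamma _ K _ _ => K

noncomputable def EmbStep.apply (g : ℝ → ℝ) (H : ℕ → ℕ) (θ : NNParams) : EmbStep → NNParams
  | .beta l K ζ => betaEmb g H l K ζ (fun _ _ => 0) θ
  | .gamma l K h lam => gammaEmb H l K h lam θ

def EmbStep.OK (H : ℕ → ℕ) (L : ℕ) : EmbStep → Prop
  | .beta l _ _ => 1 ≤ l ∧ l + 1 ≤ L
  | .gamma l K h lam => 1 ≤ l ∧ l + 1 ≤ L ∧ h < H l ∧ ∑ i ∈ Finset.range (K + 1), lam i = 1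

noncomputable def applySteps (g : ℝ → ℝ) : (ℕ → ℕ) → List EmbStep → NNParams → NNParams
  | _, [], θ => θ
  | H, st :: rest, θ =>
      applySteps g (enlargeH H st.layer st.count) rest (EmbStep.apply g H θ st)

def stepsH : (ℕ → ℕ) → List EmbStep → (ℕ → ℕ)
  | H, [] => H
  | H, st :: rest => stepsH (enlargeH H st.layer st.count) rest

lemma beta_layerOut (g : ℝ → ℝ) (H : ℕ → ℕ) (l K : ℕ) (hl : 1 ≤ l)
    (ζ : ℕ → ℝ) (s : ℕ → ℕ → ℝ) (θ : NNParams) (x : ℕ → ℝ) :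
    ∀ ℓ i, layerOut g (enlargeH H l K) (betaEmb g H l K ζ s θ) x ℓ i =
      if ℓ = l ∧ H l ≤ i then g (ζ (i - H l)) else layerOut g H θ x ℓ i := by
  intro ℓ
  induction ℓ with
  | zero =>
      intro i
      have : ¬(0 = l) := by omega
      simp [layerOut, this]
  | succ ℓ ih =>
      intro i
      rcases eq_or_ne ℓ l with hℓ | hℓ
      · -- layer ℓ + 1 = l + 1 : cancellation of the new neurons' contribution
        subst hℓ
        have hne : ¬(ℓ + 1 = ℓ) := by omega
        simp only [layerOut, enlargeH, if_pos rfl, if_true, hne, false_and, if_false]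
        rw [Finset.sum_range_add]
        have h1 : ∀ j ∈ Finset.range (H ℓ),
            (betaEmb g H ℓ K ζ s θ).w (ℓ + 1) i j *
              layerOut g (enlargeH H ℓ K) (betaEmb g H ℓ K ζ s θ) x ℓ j
            = θ.w (ℓ + 1) i j * layerOut g H θ x ℓ j := by
          intro j hj
          rw [Finset.mem_range] at hj
          rw [ih j]
          simp [betaEmb, hne, Nat.not_le.2 hj]
        have h2 : ∀ k ∈ Finset.range K,
            (betaEmb g H ℓ K ζ s θ).w (ℓ + 1) i (H ℓ + k) *
              layerOut g (enlargeH H ℓ K) (betaEmb g H ℓ K ζ s θ) x ℓ (H ℓ + k)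
            = s i k * g (ζ k) := by
          intro k _
          rw [ih (H ℓ + k)]
          simp [betaEmb, hne, Nat.le_add_right]
        rw [Finset.sum_congr rfl h1, Finset.sum_congr rfl h2]
        have hb : (betaEmb g H ℓ K ζ s θ).b (ℓ + 1) i
            = θ.b (ℓ + 1) i - ∑ k ∈ Finset.range K, s i k * g (ζ k) := by
          simp [betaEmb, hne]
        rw [hb]
        ring_nf
      · -- layer ℓ + 1 ≠ l + 1
        have hH : enlargeH H l K ℓ = H ℓ := by simp [enlargeH, hℓ]
        rcases eq_or_ne (ℓ + 1) l with hsl | hsl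
        · -- layer ℓ + 1 = l : the new neurons themselves
          simp only [layerOut, hH]
          by_cases hi : H l ≤ i
          · have : ∀ j ∈ Finset.range (H ℓ),
                (betaEmb g H l K ζ s θ).w (ℓ + 1) i j *
                  layerOut g (enlargeH H l K) (betaEmb g H l K ζ s θ) x ℓ j = 0 := by
              intro j hj
              simp [betaEmb, hsl, hi]
            rw [Finset.sum_congr rfl this, if_pos ⟨hsl, hi⟩]
            simp [betaEmb, hsl, hi]
          · have hw : ∀ j ∈ Finset.range (H ℓ),
                (betaEmb g H l K ζ s θ).w (ℓ + 1) i j *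
                  layerOut g (enlargeH H l K) (betaEmb g H l K ζ s θ) x ℓ j
                = θ.w (ℓ + 1) i j * layerOut g H θ x ℓ j := by
              intro j hj
              rw [Finset.mem_range] at hj
              rw [ih j]
              have : ¬(ℓ + 1 = l + 1) := by omega
              simp [betaEmb, hsl, hi, hℓ, this]
            rw [Finset.sum_congr rfl hw, if_neg (by tauto)]
            have hb : (betaEmb g H l K ζ s θ).b (ℓ + 1) i = θ.b (ℓ + 1) i := by
              have h1 : ¬(ℓ + 1 = l ∧ H l ≤ i) := by tauto
              have h2 : ¬(ℓ + 1 = l + 1) := by omega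
              simp [betaEmb, h1, h2, hℓ]
            rw [hb]
        · -- generic layer: everything copied
          have hsl' : ¬(ℓ + 1 = l + 1) := by omega
          simp only [layerOut, hH, if_neg (by tauto : ¬(ℓ + 1 = l ∧ H l ≤ i))]
          have hw : ∀ j ∈ Finset.range (H ℓ),
              (betaEmb g H l K ζ s θ).w (ℓ + 1) i j *
                layerOut g (enlargeH H l K) (betaEmb g H l K ζ s θ) x ℓ j
              = θ.w (ℓ + 1) i j * layerOut g H θ x ℓ j := by
            intro j hj
            rw [ih j]
            simp [betaEmb, hsl, hsl', hℓ]
          rw [Finset.sum_congr rfl hw]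
          have hb : (betaEmb g H l K ζ s θ).b (ℓ + 1) i = θ.b (ℓ + 1) i := by
            simp [betaEmb, hsl, hsl', hℓ]
          rw [hb]

lemma beta_preact_top (g : ℝ → ℝ) (H : ℕ → ℕ) (L l K : ℕ) (hl : 1 ≤ l) (hlL : l + 1 ≤ L)
    (ζ : ℕ → ℝ) (s : ℕ → ℕ → ℝ) (θ : NNParams) (x : ℕ → ℝ) (r : ℕ) :
    preact g (enlargeH H l K) (betaEmb g H l K ζ s θ) x L r = preact g H θ x L r := by
  obtain ⟨M, rfl⟩ : ∃ M, L = M + 1 := ⟨L - 1, by omega⟩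
  simp only [preact, Nat.add_sub_cancel]
  rcases eq_or_ne M l with hM | hM
  · subst hM
    have hne : ¬(M + 1 = M) := by omega
    simp only [enlargeH, if_pos rfl, if_true]
    rw [Finset.sum_range_add]
    have h1 : ∀ j ∈ Finset.range (H M),
        (betaEmb g H M K ζ s θ).w (M + 1) r j *
          layerOut g (enlargeH H M K) (betaEmb g H M K ζ s θ) x M j
        = θ.w (M + 1) r j * layerOut g H θ x M j := by
      intro j hj
      rw [Finset.mem_range] at hj
      rw [beta_layerOut g H M K hl ζ s θ x M j]
      simp [betaEmb, hne, Nat.not_le.2 hj]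
    have h2 : ∀ k ∈ Finset.range K,
        (betaEmb g H M K ζ s θ).w (M + 1) r (H M + k) *
          layerOut g (enlargeH H M K) (betaEmb g H M K ζ s θ) x M (H M + k)
        = s r k * g (ζ k) := by
      intro k _
      rw [beta_layerOut g H M K hl ζ s θ x M (H M + k)]
      simp [betaEmb, hne, Nat.le_add_right]
    rw [Finset.sum_congr rfl h1, Finset.sum_congr rfl h2]
    have hb : (betaEmb g H M K ζ s θ).b (M + 1) r
        = θ.b (M + 1) r - ∑ k ∈ Finset.range K, s r k * g (ζ k) := by
      simp [betaEmb, hne]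
    rw [hb]
    ring_nf
  · have hH : enlargeH H l K M = H M := by simp [enlargeH, hM]
    have hsl : ¬(M + 1 = l) := by omega
    have hsl' : ¬(M + 1 = l + 1) := by omega
    rw [hH]
    have hw : ∀ j ∈ Finset.range (H M),
        (betaEmb g H l K ζ s θ).w (M + 1) r j *
          layerOut g (enlargeH H l K) (betaEmb g H l K ζ s θ) x M j
        = θ.w (M + 1) r j * layerOut g H θ x M j := by
      intro j hj
      rw [beta_layerOut g H l K hl ζ s θ x M j]
      simp [betaEmb, hsl, hsl', hM]
    rw [Finset.sum_congr rfl hw]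
    have hb : (betaEmb g H l K ζ s θ).b (M + 1) r = θ.b (M + 1) r := by
      simp [betaEmb, hsl, hsl', hM]
    rw [hb]

lemma beta_Remp (g : ℝ → ℝ) (H : ℕ → ℕ) (L P : ℕ) {m : ℕ}
    (X Y : ℕ → ℕ → ℝ) (loss : (ℕ → ℝ) → (Fin m → ℝ) → ℝ)
    (l K : ℕ) (hl : 1 ≤ l) (hlL : l + 1 ≤ L)
    (ζ : ℕ → ℝ) (s : ℕ → ℕ → ℝ) (θ : NNParams) :
    Remp g (enlargeH H l K) L P X Y loss (betaEmb g H l K ζ s θ)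
      = Remp g H L P X Y loss θ := by
  unfold Remp
  congr 1
  refine Finset.sum_congr rfl fun p _ => ?_
  congr 1
  funext r
  exact beta_preact_top g H L l K hl hlL ζ s θ (X p) r

lemma multiBeta_Remp_aux (g : ℝ → ℝ) (L P : ℕ) {m : ℕ}
    (X Y : ℕ → ℕ → ℝ) (loss : (ℕ → ℝ) → (Fin m → ℝ) → ℝ)
    (ζ : ℕ → ℕ → ℝ) (s : ℕ → ℕ → ℕ → ℝ) :
    ∀ (RG : List (ℕ × ℕ)), (∀ p ∈ RG, 1 ≤ p.1 ∧ p.1 + 1 ≤ L) →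
    ∀ (H : ℕ → ℕ) (θ : NNParams),
    Remp g (multiEnlargeH H RG) L P X Y loss (multiBeta g ζ s H RG θ)
      = Remp g H L P X Y loss θ := by
  intro RG
  induction RG with
  | nil => intro _ H θ; rfl
  | cons p rest ih =>
      intro hR H θ
      obtain ⟨l, K⟩ := p
      have hp := hR (l, K) List.mem_cons_self
      rw [show multiEnlargeH H ((l, K) :: rest) = multiEnlargeH (enlargeH H l K) rest from rfl,
        show multiBeta g ζ s H ((l, K) :: rest) θ
          = multiBeta g ζ s (enlargeH H l K) rest (betaEmb g H l K (ζ l) (s l) θ) from rfl,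
        ih (fun q hq => hR q (List.mem_cons_of_mem _ hq)),
        beta_Remp g H L P X Y loss l K hp.1 hp.2]

/-- Let `RG = [(r_1, K_{r_1}), …, (r_t, K_{r_t})]` describe adding
`K_{r_i}` neurons to the (pairwise distinct) hidden layers `r_i ∈ {1, …, L-1}`.  Then
for every parameter vector `θ`, the composition of `β` embeddings preserves the empirical
risk: `R̂_emp(B_{ζs}(θ, R, Γ)) = R_emp(θ)`. -/
theorem multiBeta_preserves_Remp
    (g : ℝ → ℝ) (H : ℕ → ℕ) (L P : ℕ) (X Y : ℕ → ℕ → ℝ)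
    (loss : (ℕ → ℝ) → (Fin (H L) → ℝ) → ℝ)
    (RG : List (ℕ × ℕ)) (hnd : (RG.map Prod.fst).Nodup)
    (hR : ∀ p ∈ RG, 1 ≤ p.1 ∧ p.1 + 1 ≤ L)
    (ζ : ℕ → ℕ → ℝ) (s : ℕ → ℕ → ℕ → ℝ) (θ : NNParams) :
    Remp g (multiEnlargeH H RG) L P X Y loss (multiBeta g ζ s H RG θ)
      = Remp g H L P X Y loss θ := by
  exact multiBeta_Remp_aux g L P X Y loss ζ s RG hR H θ
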